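/- There is an absolute constant c₀ such that the following holds for all c ≥ c₀. Let n ≥ 2, let α ∈ (0,1], ε > 0, and let k with 1 < k ≤ n be an integer with e^{−k} < α, let L ≥ ln n be a positive integer, and suppose m1 := (c/64)k² and m2 := (c/α^{2+ε})k² are positive integers. Let X = (X_r)_{0 ≤ r < t}, with t ≥ (m2+1)·L, have independent {0,1}-valued coordinates with P(X_r = 1) = p(r) = 1/√(⌊r/L⌋+1). Let Y⊤ = ∑_{r=0}^{m1·L − 1} X_r and Y⊥ = ∑_{r=m1·L}^{(m2+1)·L − 1} X_r. Then the probability that the Weight Inequality fails, i.e., P(Y⊤ > α·Y⊥), is at most (2/c²)·n^{−8·ln(4/α)}. -/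

import Mathlib

open MeasureTheory Finset

/-- Probability of a one at position `r` in the random matrix construction with block
length `L`: `p(r) = 1/√(⌊r/L⌋+1)` (natural-number division is floor division). -/
noncomputable def pval (L r : ℕ) : ℝ := 1 / Real.sqrt (((r / L : ℕ) : ℝ) + 1)

/-- The Bernoulli measure on `Bool` with parameter `p`. -/
noncomputable def bern (p : ℝ) : Measure Bool :=
  ENNReal.ofReal p • Measure.dirac true + ENNReal.ofReal (1 - p) • Measure.dirac false

instance bern_finite (p : ℝ) : IsFiniteMeasure (bern p) := by
  constructor
  simp [bern]

lemma bern_true (p : ℝ) : bern p {true} = ENNReal.ofReal p := by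
  simp [bern, Measure.dirac_apply]

lemma bern_false (p : ℝ) : bern p {false} = ENNReal.ofReal (1 - p) := by
  simp [bern, Measure.dirac_apply]

lemma pval_pos (L r : ℕ) : 0 < pval L r := by unfold pval; positivity

lemma pval_le_one (L r : ℕ) : pval L r ≤ 1 := by
  unfold pval
  rw [div_le_one (by positivity)]
  nlinarith [Real.sq_sqrt (by positivity : (0:ℝ) ≤ ((r/L : ℕ):ℝ)+1),
    Real.sqrt_nonneg (((r/L : ℕ):ℝ)+1), Nat.cast_nonneg (α := ℝ) (r/L)]

/-- Weight of a Boolean value under Bernoulli(pval). -/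
noncomputable def wfun (L r : ℕ) (b : Bool) : ℝ := if b then pval L r else 1 - pval L r

lemma wfun_nonneg (L r : ℕ) (b : Bool) : 0 ≤ wfun L r b := by
  cases b
  · simp [wfun]; linarith [pval_le_one L r]
  · simp [wfun]; exact (pval_pos L r).le

/-- The tilting exponent at position `r`. -/
noncomputable def phit (N1 N2 : ℕ) (lam alam : ℝ) (r : ℕ) : ℝ :=
  if r < N1 then lam else if r < N2 then -alam else 0

/-- The tilting exponent for value `b` at position `r`. -/
noncomputable def phi (N1 N2 : ℕ) (lam alam : ℝ) (r : ℕ) (b : Bool) : ℝ :=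
  if b then phit N1 N2 lam alam r else 0

/-- partial sums of `1/√(b+1)` -/
noncomputable def Ssum (m : ℕ) : ℝ := ∑ b ∈ range m, 1 / Real.sqrt ((b:ℝ) + 1)

lemma Ssum_nonneg (m : ℕ) : 0 ≤ Ssum m := by
  apply Finset.sum_nonneg; intro i _; positivity

lemma Ssum_le (m : ℕ) : Ssum m ≤ 2 * Real.sqrt m := by
  induction m with
  | zero => simp [Ssum]
  | succ m ih =>
    rw [Ssum, Finset.sum_range_succ, ← Ssum]
    have hu : Real.sqrt m ^ 2 = m := Real.sq_sqrt (by positivity)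
    have hv : Real.sqrt ((m:ℝ)+1) ^ 2 = (m:ℝ)+1 := Real.sq_sqrt (by positivity)
    have hv1 : 1 ≤ Real.sqrt ((m:ℝ)+1) := by
      nlinarith [Real.sqrt_nonneg ((m:ℝ)+1), Nat.cast_nonneg (α := ℝ) m]
    have huv : 2 * (Real.sqrt m * Real.sqrt ((m:ℝ)+1)) ≤ 2*(m:ℝ)+1 := by
      nlinarith [sq_nonneg (Real.sqrt m - Real.sqrt ((m:ℝ)+1))]
    have key : 1 / Real.sqrt ((m:ℝ)+1) ≤ 2 * (Real.sqrt ((m:ℝ)+1) - Real.sqrt m) := by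
      rw [div_le_iff₀ (by linarith)]
      nlinarith
    have hc : ((m+1 : ℕ) : ℝ) = (m:ℝ) + 1 := by push_cast; ring
    rw [hc]
    linarith [ih]

lemma Ssum_ge (m : ℕ) : 2 * (Real.sqrt ((m:ℝ)+1) - 1) ≤ Ssum m := by
  induction m with
  | zero => simp [Ssum]
  | succ m ih =>
    rw [Ssum, Finset.sum_range_succ, ← Ssum]
    have hv : Real.sqrt ((m:ℝ)+1) ^ 2 = (m:ℝ)+1 := Real.sq_sqrt (by positivity)
    have hw : Real.sqrt ((m:ℝ)+2) ^ 2 = (m:ℝ)+2 := Real.sq_sqrt (by positivity)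
    have hv1 : 1 ≤ Real.sqrt ((m:ℝ)+1) := by
      nlinarith [Real.sqrt_nonneg ((m:ℝ)+1), Nat.cast_nonneg (α := ℝ) m]
    have hw0 : 0 ≤ Real.sqrt ((m:ℝ)+2) := Real.sqrt_nonneg _
    have hvw : 2 * (Real.sqrt ((m:ℝ)+1) * Real.sqrt ((m:ℝ)+2)) ≤ 2*(m:ℝ)+3 := by
      nlinarith [sq_nonneg (2 * (Real.sqrt ((m:ℝ)+1) * Real.sqrt ((m:ℝ)+2)) - (2*(m:ℝ)+3))]
    have key : 2 * (Real.sqrt ((m:ℝ)+2) - Real.sqrt ((m:ℝ)+1)) ≤ 1 / Real.sqrt ((m:ℝ)+1) := by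
      rw [le_div_iff₀ (by linarith)]
      nlinarith
    have hc : ((m+1 : ℕ) : ℝ) = (m:ℝ) + 1 := by push_cast; ring
    rw [hc]
    have hc2 : ((m:ℝ) + 1) + 1 = (m:ℝ) + 2 := by ring
    rw [hc2]
    linarith [ih]

lemma blocksum (L : ℕ) (hL : 0 < L) (m : ℕ) :
    ∑ r ∈ range (m * L), pval L r = (L : ℝ) * Ssum m := by
  induction m with
  | zero => simp [Ssum]
  | succ m ih =>
    have hsplit : ∑ r ∈ Finset.Ico 0 (m*L), pval L r + ∑ r ∈ Finset.Ico (m*L) ((m+1)*L), pval L r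
        = ∑ r ∈ Finset.Ico 0 ((m+1)*L), pval L r :=
      Finset.sum_Ico_consecutive _ (Nat.zero_le _) (by nlinarith)
    have hconst : ∑ r ∈ Finset.Ico (m*L) ((m+1)*L), pval L r
        = (L:ℝ) * (1 / Real.sqrt ((m:ℝ)+1)) := by
      rw [Finset.sum_congr rfl (fun r hr => ?_), Finset.sum_const, Nat.card_Ico]
      · rw [show (m+1)*L - m*L = L by ring_nf; omega, nsmul_eq_mul]
      · rw [Finset.mem_Ico] at hr
        unfold pval
        rw [Nat.div_eq_of_lt_le hr.1 (by omega)]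
    simp only [← Finset.range_eq_Ico] at hsplit
    rw [show (m+1)*L = m*L + L by ring] at hsplit hconst ⊢
    rw [← hsplit, ih, hconst]
    unfold Ssum
    rw [Finset.sum_range_succ]
    ring

/-- splitting the tilted mean over the three regions -/
lemma sumsplit (L : ℕ) (N1 N2 tt : ℕ) (hN12 : N1 ≤ N2) (hN2t : N2 ≤ tt) (lam alam : ℝ) :
    ∑ r ∈ range tt, pval L r * (Real.exp (phit N1 N2 lam alam r) - 1)
      = (∑ r ∈ range N1, pval L r) * (Real.exp lam - 1)
        + (∑ r ∈ Finset.Ico N1 N2, pval L r) * (Real.exp (-alam) - 1) := by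
  have hvan : ∑ r ∈ range N2, pval L r * (Real.exp (phit N1 N2 lam alam r) - 1)
      = ∑ r ∈ range tt, pval L r * (Real.exp (phit N1 N2 lam alam r) - 1) := by
    apply Finset.sum_subset (Finset.range_subset_range.2 hN2t)
    intro r _ hr
    rw [Finset.mem_range] at hr
    unfold phit
    rw [if_neg (by omega), if_neg (by omega)]
    simp
  rw [← hvan]
  have hsplit := Finset.sum_Ico_consecutive
    (fun r => pval L r * (Real.exp (phit N1 N2 lam alam r) - 1)) (Nat.zero_le N1) hN12
  simp only [← Finset.range_eq_Ico] at hsplit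
  rw [← hsplit]
  congr 1
  · rw [Finset.sum_congr rfl (fun r hr => ?_), ← Finset.sum_mul]
    rw [Finset.mem_range] at hr
    unfold phit
    rw [if_pos hr]
  · rw [Finset.sum_congr rfl (fun r hr => ?_), ← Finset.sum_mul]
    rw [Finset.mem_Ico] at hr
    unfold phit
    rw [if_neg (by omega), if_pos hr.2]

/-- product-sum exchange over a finite product space -/
lemma exchange {t : ℕ} (G : Fin t → Bool → ℝ) :
    ∑ x : Fin t → Bool, ∏ r, G r (x r) = ∏ r, (G r true + G r false) := by
  rw [← Fintype.prod_sum]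
  simp

lemma one_le_exp_of_nonneg {z : ℝ} (hz : 0 ≤ z) : 1 ≤ Real.exp z := by
  have := Real.add_one_le_exp z
  linarith

/-- `√(c/64·k²) = √c·k/8` -/
lemma sq_m1 (c s kq m1q : ℝ) (hs2 : s^2 = c) (hs0 : 0 ≤ s) (hk0 : 0 ≤ kq)
    (hm1r : m1q = c/64*kq^2) : Real.sqrt m1q = s*kq/8 := by
  rw [show m1q = (s*kq/8)^2 by rw [hm1r, ← hs2]; ring]
  exact Real.sqrt_sq (by positivity)

lemma aux_m2core (c α m2q kq aε : ℝ) (hα : 0 < α) (hαε : aε ≤ 1) (hαεpos : 0 < aε)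
    (hkey : α^2 * m2q * aε = c * kq^2) (hm2pos : 0 ≤ m2q) :
    c * kq^2 ≤ α^2 * m2q := by
  nlinarith [mul_nonneg (sq_nonneg α) hm2pos]

lemma aux_m1m2 (c α kq m1q m2q p : ℝ) (hc0 : 0 < c) (hp : 0 < p) (hple : p ≤ 64)
    (hm1r : m1q = c/64*kq^2) (hm2r : m2q = c/p*kq^2) : m1q ≤ m2q := by
  have hdd : c / 64 ≤ c / p := div_le_div_of_nonneg_left hc0.le hp hple
  rw [hm1r, hm2r]
  nlinarith [sq_nonneg kq]

lemma aux_hin (α skq r2 : ℝ) (hα : 0 < α) (hα1 : α ≤ 1) (hskq : 0 ≤ skq)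
    (he1 : skq ≤ α * r2) : (7/4)*skq - 2 ≤ α*(2*r2 - 2 - skq/4) := by
  nlinarith

lemma aux_h6A (Lq skq A B : ℝ) (hA : A ≤ Lq*skq/4) (hB : Lq*((7/4)*skq) - 2*Lq ≤ B)
    (hsk : 2000 ≤ skq) (hLq : 1 ≤ Lq) : 6*A ≤ B := by
  have h1 : (0:ℝ) ≤ Lq * (skq - 8) := mul_nonneg (by linarith) (by linarith)
  nlinarith

set_option maxHeartbeats 1000000 in
lemma numeric_main (c s kr Lr B lgn lg4 : ℝ) (hs : 1000 ≤ s) (hs2 : s^2 = c)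
    (hkr : 2 ≤ kr) (hLr : 1 ≤ Lr)
    (hB : Lr * ((7/4) * (s*kr)) - 2*Lr ≤ B)
    (hlgn : 0 ≤ lgn) (hlgnL : lgn ≤ Lr)
    (hlg4 : 0 < lg4) (hlg4k : lg4 ≤ (17/10)*kr) :
    8 * lg4 * lgn + 2 * Real.log c ≤ B/6 := by
  have hs0 : (0:ℝ) < s := by linarith
  have hc0 : (0:ℝ) < c := by rw [← hs2]; positivity
  set u := Real.sqrt s with hu
  have hu0 : 0 < u := Real.sqrt_pos.2 hs0
  have hu2 : u^2 = s := Real.sq_sqrt hs0.le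
  have hu31 : 31 ≤ u := by nlinarith
  have hlogc : Real.log c = 4 * Real.log u := by
    rw [← hs2, ← hu2]
    rw [Real.log_pow, Real.log_pow]
    push_cast; ring
  have hlogu : Real.log u ≤ u - 1 := Real.log_le_sub_one_of_pos hu0
  have h2lc : 2 * Real.log c ≤ 8 * u := by rw [hlogc]; linarith
  have huu : 8 * u ≤ (8/31) * s := by nlinarith
  have h84 : 8 * lg4 * lgn ≤ 8 * ((17/10)*kr) * Lr := by
    have h1 : lg4 * lgn ≤ lg4 * Lr := by nlinarith
    have h2 : lg4 * Lr ≤ ((17/10)*kr) * Lr := by nlinarith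
    linarith
  set X := Lr * (s * kr) with hX
  have hkL : (0:ℝ) ≤ kr * Lr := by positivity
  have e1 : (8 * ((17/10)*kr)) * Lr ≤ (7/100) * X := by
    have hkk : (0:ℝ) ≤ (kr * Lr) * (s - 1000) := mul_nonneg hkL (by linarith)
    nlinarith
  have e2 : (8/31) * s ≤ (11/50) * X := by
    have h2' : (2:ℝ) ≤ Lr * kr := by
      calc (2:ℝ) = 1 * 2 := by norm_num
      _ ≤ Lr * kr := mul_le_mul hLr hkr (by norm_num) (by linarith)
    have h3' : (0:ℝ) ≤ s * (Lr * kr - 2) := mul_nonneg hs0.le (by linarith)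
    nlinarith
  have e3 : Lr / 3 ≤ (1/600) * X := by
    have hsk : (2000:ℝ) ≤ s * kr := by
      calc (2000:ℝ) = 1000 * 2 := by norm_num
      _ ≤ s * kr := mul_le_mul hs hkr (by norm_num) (by linarith)
    have hxx : (0:ℝ) ≤ Lr * (s * kr - 2000) := mul_nonneg (by linarith) (by linarith)
    nlinarith
  have hB6 : (7/24) * X - Lr / 3 ≤ B / 6 := by rw [hX]; linarith
  linarith

lemma aux_le_one (α aε : ℝ) (h0 : 0 < α) (h1 : α ≤ 1) (h2 : 0 < aε) (h3 : aε ≤ 1) :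
    α^2 * aε ≤ 1 := by nlinarith

lemma log4_le : Real.log 4 ≤ 7/5 := by
  rw [show (4:ℝ) = 2^2 by norm_num, Real.log_pow]
  push_cast
  nlinarith [Real.log_two_lt_d9]

set_option maxHeartbeats 2000000 in
/-- Failure probability of the Weight Inequality: there is an absolute constant `c₀`
such that for all `c ≥ c₀`, for a random column `X` of length `t ≥ (m2+1)·L` with
independent Bernoulli(`p(r)`) coordinates, with `Y⊤` the weight of `[0, m1·L)` and
`Y⊥` the weight of `[m1·L, (m2+1)·L)`, we have
`P(Y⊤ > α·Y⊥) ≤ (2/c²)·n^{−8·ln(4/α)}`. -/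
theorem stmt13 :
    ∃ c₀ : ℝ, ∀ c : ℝ, c₀ ≤ c →
      ∀ n : ℕ, 2 ≤ n → ∀ α ε : ℝ, 0 < α → α ≤ 1 → 0 < ε →
        ∀ k : ℕ, 1 < k → k ≤ n → Real.exp (-(k : ℝ)) < α →
          ∀ L : ℕ, 0 < L → Real.log n ≤ (L : ℝ) →
            ∀ m1 m2 : ℕ, 0 < m1 → 0 < m2 →
              (m1 : ℝ) = c / 64 * (k : ℝ) ^ 2 →
              (m2 : ℝ) = c / α ^ ((2 : ℝ) + ε) * (k : ℝ) ^ 2 →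
              ∀ t : ℕ, (m2 + 1) * L ≤ t →
                (Measure.pi fun r : Fin t => bern (pval L r.val))
                    {ω : Fin t → Bool |
                      α * ∑ r : Fin t,
                          (if m1 * L ≤ r.val ∧ r.val < (m2 + 1) * L ∧ ω r = true
                            then (1 : ℝ) else 0)
                        < ∑ r : Fin t,
                            (if r.val < m1 * L ∧ ω r = true then (1 : ℝ) else 0)}
                  ≤ ENNReal.ofReal
                      (2 / c ^ 2 * (n : ℝ) ^ (-(8 * Real.log (4 / α)))) := by
  classical
  use 1000000
  intro c hc n hn α ε hα hα1 hε k hk hkn hexpk L hL hLn m1 m2 hm1 hm2 hm1r hm2r t ht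
  -- ======= basic quantities =======
  have hc0 : (0:ℝ) < c := by linarith only [hc]
  set s : ℝ := Real.sqrt c with hs_def
  have hs2 : s^2 = c := Real.sq_sqrt hc0.le
  have hs0 : 0 < s := Real.sqrt_pos.2 hc0
  have hs1000 : (1000:ℝ) ≤ s := by
    have h1 : Real.sqrt ((1000:ℝ)^2) ≤ Real.sqrt c := Real.sqrt_le_sqrt (by norm_num; linarith only [hc])
    rwa [Real.sqrt_sq (by norm_num)] at h1
  have hkr : (2:ℝ) ≤ (k:ℝ) := by exact_mod_cast hk
  have hLr : (1:ℝ) ≤ (L:ℝ) := by exact_mod_cast hL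
  have hkr0 : (0:ℝ) ≤ (k:ℝ) := by linarith only [hkr]
  have hLr0 : (0:ℝ) ≤ (L:ℝ) := by linarith only [hLr]
  -- √m1 = s k / 8
  have hsqm1 : Real.sqrt (m1:ℝ) = s * (k:ℝ) / 8 :=
    sq_m1 c s (k:ℝ) (m1:ℝ) hs2 hs0.le hkr0 hm1r
  -- α √m2 ≥ s k
  have hαε : α ^ (ε:ℝ) ≤ 1 := Real.rpow_le_one hα.le hα1 hε.le
  have hαεpos : 0 < α ^ (ε:ℝ) := Real.rpow_pos_of_pos hα _
  have hpow : α ^ ((2:ℝ)+ε) = α^2 * α^(ε:ℝ) := by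
    rw [Real.rpow_add hα, show ((2:ℝ)) = ((2:ℕ):ℝ) by norm_num, Real.rpow_natCast]
  have hαm2core : c * (k:ℝ)^2 ≤ α^2 * (m2:ℝ) := by
    refine aux_m2core c α (m2:ℝ) (k:ℝ) (α^(ε:ℝ)) hα hαε hαεpos ?_ (Nat.cast_nonneg m2)
    rw [hm2r, hpow]; field_simp
  have hαm2 : s * (k:ℝ) ≤ α * Real.sqrt (m2:ℝ) := by
    have h1 : s * (k:ℝ) = Real.sqrt (c * (k:ℝ)^2) := by
      rw [Real.sqrt_mul hc0.le, Real.sqrt_sq (by positivity)]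
    have h2 : α * Real.sqrt (m2:ℝ) = Real.sqrt (α^2 * (m2:ℝ)) := by
      rw [Real.sqrt_mul (sq_nonneg α), Real.sqrt_sq hα.le]
    rw [h1, h2]
    exact Real.sqrt_le_sqrt hαm2core
  -- m1 ≤ m2
  have hm1m2 : m1 ≤ m2 := by
    have hle64 : α ^ ((2:ℝ)+ε) ≤ 64 := by
      calc α ^ ((2:ℝ)+ε) = α^2 * α^(ε:ℝ) := hpow
      _ ≤ 1 := aux_le_one α (α^(ε:ℝ)) hα hα1 hαεpos hαε
      _ ≤ 64 := by norm_num
    have hr : (m1:ℝ) ≤ (m2:ℝ) :=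
      aux_m1m2 c α (k:ℝ) (m1:ℝ) (m2:ℝ) (α ^ ((2:ℝ)+ε)) hc0
        (Real.rpow_pos_of_pos hα _) hle64 hm1r hm2r
    exact_mod_cast hr
  set N1 := m1 * L with hN1_def
  set N2 := (m2 + 1) * L with hN2_def
  have hN12 : N1 ≤ N2 := Nat.mul_le_mul_right L (by omega)
  -- ======= block sums =======
  set A : ℝ := ∑ r ∈ range N1, pval L r with hA_def
  set Bl : ℝ := ∑ r ∈ Finset.Ico N1 N2, pval L r with hBl_def
  have hA_eq : A = (L:ℝ) * Ssum m1 := blocksum L hL m1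
  have hAB : A + Bl = (L:ℝ) * Ssum (m2+1) := by
    rw [hA_def, hBl_def, hN1_def, hN2_def]
    rw [show (∑ r ∈ range (m1*L), pval L r) = ∑ r ∈ Finset.Ico 0 (m1*L), pval L r by
      rw [Finset.range_eq_Ico]]
    rw [Finset.sum_Ico_consecutive _ (Nat.zero_le _) (Nat.mul_le_mul_right L (by omega))]
    rw [← Finset.range_eq_Ico]
    exact blocksum L hL (m2+1)
  have hApos : 0 < A := by
    rw [hA_def]
    apply Finset.sum_pos (fun i _ => pval_pos L i)
    exact Finset.nonempty_range_iff.2 (Nat.mul_pos hm1 hL).ne'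
  have hBlnonneg : 0 ≤ Bl := Finset.sum_nonneg (fun i _ => (pval_pos L i).le)
  -- bounds on A and B := α * Bl
  have hAle : A ≤ (L:ℝ) * (s * (k:ℝ)) / 4 := by
    rw [hA_eq]
    have h1 : Ssum m1 ≤ 2 * (s * (k:ℝ) / 8) := by
      have h := Ssum_le m1; rwa [hsqm1] at h
    calc (L:ℝ) * Ssum m1 ≤ (L:ℝ) * (2 * (s * (k:ℝ) / 8)) := mul_le_mul_of_nonneg_left h1 hLr0
    _ = (L:ℝ) * (s * (k:ℝ)) / 4 := by ring
  set B : ℝ := α * Bl with hB_def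
  have hBnonneg : 0 ≤ B := mul_nonneg hα.le hBlnonneg
  have hBge : (L:ℝ) * ((7/4) * (s * (k:ℝ))) - 2 * (L:ℝ) ≤ B := by
    have hBl_eq : Bl = (L:ℝ) * Ssum (m2+1) - (L:ℝ) * Ssum m1 := by linarith only [hA_eq, hAB]
    have hg : 2 * (Real.sqrt ((m2:ℝ)+2) - 1) ≤ Ssum (m2+1) := by
      have h := Ssum_ge (m2+1)
      rw [show (((m2+1:ℕ)):ℝ) = (m2:ℝ)+1 by push_cast; ring] at h
      rw [show ((m2:ℝ)+1)+1 = (m2:ℝ)+2 by ring] at h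
      exact h
    have hl : Ssum m1 ≤ 2 * (s * (k:ℝ) / 8) := by
      have h := Ssum_le m1
      rwa [hsqm1] at h
    have hmono : Real.sqrt (m2:ℝ) ≤ Real.sqrt ((m2:ℝ)+2) := Real.sqrt_le_sqrt (by linarith only [])
    have hαs : s * (k:ℝ) ≤ α * Real.sqrt ((m2:ℝ)+2) := by
      have hmm := mul_le_mul_of_nonneg_left hmono hα.le
      linarith only [hmm, hαm2]
    have hDD : 2*Real.sqrt ((m2:ℝ)+2) - 2 - (s * (k:ℝ) / 4) ≤ Ssum (m2+1) - Ssum m1 := by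
      linarith only [hg, hl]
    have hin : (7/4) * (s * (k:ℝ)) - 2 ≤ α * (2*Real.sqrt ((m2:ℝ)+2) - 2 - (s * (k:ℝ) / 4)) :=
      aux_hin α (s * (k:ℝ)) (Real.sqrt ((m2:ℝ)+2)) hα hα1 (by positivity) hαs
    have hαDD := mul_le_mul_of_nonneg_left hDD hα.le
    have hB_eq : B = (L:ℝ) * (α * (Ssum (m2+1) - Ssum m1)) := by
      rw [hB_def, hBl_eq]; ring
    rw [hB_eq]
    have hmid : (L:ℝ) * ((7/4) * (s * (k:ℝ)) - 2)
        ≤ (L:ℝ) * (α * (Ssum (m2+1) - Ssum m1)) :=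
      mul_le_mul_of_nonneg_left (by linarith only [hin, hαDD]) hLr0
    linarith only [hmid]
  -- ======= the tilt =======
  have hsk2000 : (2000:ℝ) ≤ s * (k:ℝ) := by
    calc (2000:ℝ) = 1000 * 2 := by norm_num
    _ ≤ s * (k:ℝ) := mul_le_mul hs1000 hkr (by norm_num) (by linarith only [hs1000])
  have h6A : 6 * A ≤ B := aux_h6A (L:ℝ) (s * (k:ℝ)) A B hAle hBge hsk2000 hLr
  set R : ℝ := B / (2*A) with hR_def
  have hR3 : (3:ℝ) ≤ R := by
    rw [hR_def, le_div_iff₀ (by linarith only [hApos])]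
    linarith only [h6A]
  have hR0 : (0:ℝ) < R := by linarith only [hR3]
  set lam : ℝ := Real.log R with hlam_def
  have hlam0 : 0 < lam := Real.log_pos (by linarith only [hR3])
  have hexplam : Real.exp lam = R := Real.exp_log hR0
  have hAR : A * R = B / 2 := by
    rw [hR_def]
    field_simp
  have hconv : Real.exp (-(α*lam)) ≤ 1 - α + α * (1/R) := by
    have h := convexOn_exp.2 (Set.mem_univ (0:ℝ)) (Set.mem_univ (-lam))
      (by linarith only [hα1] : (0:ℝ) ≤ 1-α) hα.le (by ring)
    simp only [smul_eq_mul, mul_zero, zero_add, Real.exp_zero, mul_one] at h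
    rw [show -(α*lam) = α * (-lam) by ring]
    calc Real.exp (α * (-lam)) ≤ (1-α) + α * Real.exp (-lam) := h
    _ = 1 - α + α * (1/R) := by rw [Real.exp_neg, hexplam]; ring
  -- exponent bound
  have hE : A * (Real.exp lam - 1) + Bl * (Real.exp (-(α*lam)) - 1) ≤ -B/6 := by
    rw [hexplam]
    have h1 : A * (R - 1) ≤ B/2 := by
      have hh : A * (R-1) = A * R - A := by ring
      rw [hh, hAR]
      linarith only [hApos]
    have h2 : Bl * (Real.exp (-(α*lam)) - 1) ≤ B * (1/R) - B := by
      have hb := mul_le_mul_of_nonneg_left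
        (by linarith only [hconv] : Real.exp (-(α*lam)) - 1 ≤ α*(1/R) - α) hBlnonneg
      calc Bl * (Real.exp (-(α*lam)) - 1) ≤ Bl * (α*(1/R) - α) := hb
      _ = B * (1/R) - B := by rw [hB_def]; ring
    have h3 : B * (1/R) ≤ B/3 := by
      rw [mul_one_div]
      gcongr
    linarith only [h1, h2, h3]
  -- ======= final numeric bound =======
  have hlg4pos : 0 < Real.log (4/α) := Real.log_pos (by rw [lt_div_iff₀ hα]; linarith only [hα1])
  have hlg4le : Real.log (4/α) ≤ (17/10) * (k:ℝ) := by
    rw [Real.log_div (by norm_num) hα.ne']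
    have h2 : Real.log 4 ≤ 7/5 := log4_le
    have h3 : -(k:ℝ) < Real.log α := by
      have := Real.log_lt_log (Real.exp_pos _) hexpk
      rwa [Real.log_exp] at this
    linarith only [h2, h3, hkr]
  have hlgn0 : 0 ≤ Real.log n := Real.log_nonneg (by exact_mod_cast Nat.one_le_of_lt hn)
  have hnum : 8 * Real.log (4/α) * Real.log n + 2 * Real.log c ≤ B/6 :=
    numeric_main c s (k:ℝ) (L:ℝ) B (Real.log n) (Real.log (4/α)) hs1000 hs2 hkr hLr hBge
      hlgn0 hLn hlg4pos hlg4le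
  have hRHS : Real.exp (-B/6) ≤ 2 / c^2 * (n:ℝ) ^ (-(8 * Real.log (4/α))) := by
    have hn0 : (0:ℝ) < (n:ℝ) := by positivity
    rw [Real.rpow_def_of_pos hn0]
    rw [show (2:ℝ)/c^2 = Real.exp (Real.log (2/c^2)) from (Real.exp_log (by positivity)).symm]
    rw [← Real.exp_add]
    apply Real.exp_le_exp.2
    have hlog2 : Real.log (2/c^2) = Real.log 2 - 2 * Real.log c := by
      rw [Real.log_div (by norm_num) (by positivity), Real.log_pow]
      push_cast; ring
    rw [hlog2]
    have hlog2pos : 0 < Real.log 2 := Real.log_pos (by norm_num)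
    linarith only [hnum, hlog2pos]
  -- ======= the measure computation =======
  set P := Measure.pi fun r : Fin t => bern (pval L r.val) with hP_def
  set S := {ω : Fin t → Bool |
      α * ∑ r : Fin t, (if N1 ≤ r.val ∧ r.val < N2 ∧ ω r = true then (1 : ℝ) else 0)
        < ∑ r : Fin t, (if r.val < N1 ∧ ω r = true then (1 : ℝ) else 0)} with hS_def
  have hsing : ∀ x : Fin t → Bool, P {x} = ENNReal.ofReal (∏ r : Fin t, wfun L r.val (x r)) := by
    intro x
    rw [hP_def, ← Set.univ_pi_singleton, Measure.pi_pi]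
    rw [show ENNReal.ofReal (∏ r : Fin t, wfun L r.val (x r))
        = ∏ r : Fin t, ENNReal.ofReal (wfun L r.val (x r)) from
      ENNReal.ofReal_prod_of_nonneg (fun i _ => wfun_nonneg L i.val (x i))]
    refine Finset.prod_congr rfl (fun r _ => ?_)
    cases hxr : x r
    · simp [hxr, bern_false, wfun]
    · simp [hxr, bern_true, wfun]
  have hSfin : S.Finite := Set.toFinite _
  have hPS : P S = ENNReal.ofReal (∑ x ∈ hSfin.toFinset, ∏ r : Fin t, wfun L r.val (x r)) := by
    have hU : S = ⋃ x ∈ hSfin.toFinset, {x} := by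
      ext y
      simp only [Set.mem_iUnion, Set.mem_singleton_iff, Set.Finite.mem_toFinset, exists_prop]
      constructor
      · intro h; exact ⟨y, h, rfl⟩
      · rintro ⟨x, hx, rfl⟩; exact hx
    have hdisj : (↑hSfin.toFinset : Set (Fin t → Bool)).PairwiseDisjoint
        (fun x => ({x} : Set (Fin t → Bool))) := by
      intro x _ y _ hxy
      simp [Function.onFun, Set.disjoint_singleton, hxy]
    have hPSU : P S = ∑ x ∈ hSfin.toFinset, P {x} := by
      conv_lhs => rw [hU]
      exact measure_biUnion_finset hdisj (fun b _ => measurableSet_singleton b)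
    rw [hPSU, ENNReal.ofReal_sum_of_nonneg
      (fun x _ => Finset.prod_nonneg (fun r _ => wfun_nonneg L r.val (x r)))]
    exact Finset.sum_congr rfl (fun x _ => hsing x)
  rw [hPS]
  apply ENNReal.ofReal_le_ofReal
  -- ======= the Chernoff argument (real-valued) =======
  have hident : ∀ x : Fin t → Bool,
      ∑ r : Fin t, phi N1 N2 lam (α*lam) r.val (x r)
        = lam * ((∑ r : Fin t, if r.val < N1 ∧ x r = true then (1:ℝ) else 0)
            - α * (∑ r : Fin t, if N1 ≤ r.val ∧ r.val < N2 ∧ x r = true then (1:ℝ) else 0)) := by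
    intro x
    have hterm : ∀ r : Fin t, phi N1 N2 lam (α*lam) r.val (x r)
        = lam * (if r.val < N1 ∧ x r = true then (1:ℝ) else 0)
          - (lam*α) * (if N1 ≤ r.val ∧ r.val < N2 ∧ x r = true then (1:ℝ) else 0) := by
      intro r
      cases hxr : x r
      · simp [phi, hxr]
      · by_cases h1 : r.val < N1
        · simp [phi, phit, hxr, h1, show ¬ N1 ≤ r.val by omega]
        · by_cases h2 : r.val < N2
          · simp [phi, phit, hxr, h1, h2, show N1 ≤ r.val by omega]
            ring
          · simp [phi, phit, hxr, h1, h2]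
    rw [Finset.sum_congr rfl (fun r _ => hterm r), Finset.sum_sub_distrib,
      ← Finset.mul_sum, ← Finset.mul_sum]
    ring
  calc ∑ x ∈ hSfin.toFinset, ∏ r : Fin t, wfun L r.val (x r)
      ≤ ∑ x ∈ hSfin.toFinset, (∏ r : Fin t, wfun L r.val (x r))
          * Real.exp (∑ r : Fin t, phi N1 N2 lam (α*lam) r.val (x r)) := by
        apply Finset.sum_le_sum
        intro x hx
        apply le_mul_of_one_le_right
          (Finset.prod_nonneg (fun r _ => wfun_nonneg L r.val (x r)))
        apply one_le_exp_of_nonneg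
        rw [hident x]
        have hmem : x ∈ S := hSfin.mem_toFinset.1 hx
        rw [hS_def, Set.mem_setOf_eq] at hmem
        have hd : 0 ≤ (∑ r : Fin t, if r.val < N1 ∧ x r = true then (1:ℝ) else 0)
            - α * (∑ r : Fin t, if N1 ≤ r.val ∧ r.val < N2 ∧ x r = true then (1:ℝ) else 0) := by
          linarith only [hmem]
        exact mul_nonneg hlam0.le hd
    _ ≤ ∑ x : Fin t → Bool, (∏ r : Fin t, wfun L r.val (x r))
          * Real.exp (∑ r : Fin t, phi N1 N2 lam (α*lam) r.val (x r)) := by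
        apply Finset.sum_le_sum_of_subset_of_nonneg (Finset.subset_univ _)
        intro x _ _
        exact mul_nonneg (Finset.prod_nonneg (fun r _ => wfun_nonneg L r.val (x r)))
          (Real.exp_pos _).le
    _ = ∑ x : Fin t → Bool, ∏ r : Fin t,
          (wfun L r.val (x r) * Real.exp (phi N1 N2 lam (α*lam) r.val (x r))) := by
        refine Finset.sum_congr rfl (fun x _ => ?_)
        rw [Real.exp_sum, ← Finset.prod_mul_distrib]
    _ = ∏ r : Fin t, (wfun L r.val true * Real.exp (phi N1 N2 lam (α*lam) r.val true)
          + wfun L r.val false * Real.exp (phi N1 N2 lam (α*lam) r.val false)) := by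
        exact exchange (fun r b => wfun L r.val b * Real.exp (phi N1 N2 lam (α*lam) r.val b))
    _ ≤ ∏ r : Fin t, Real.exp (pval L r.val * (Real.exp (phit N1 N2 lam (α*lam) r.val) - 1)) := by
        apply Finset.prod_le_prod
        · intro r _
          have h1 := wfun_nonneg L r.val true
          have h2 := wfun_nonneg L r.val false
          positivity
        · intro r _
          have heq : wfun L r.val true * Real.exp (phi N1 N2 lam (α*lam) r.val true)
              + wfun L r.val false * Real.exp (phi N1 N2 lam (α*lam) r.val false)
              = pval L r.val * (Real.exp (phit N1 N2 lam (α*lam) r.val) - 1) + 1 := by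
            simp [wfun, phi]
            ring
          rw [heq]
          have hae := Real.add_one_le_exp
            (pval L r.val * (Real.exp (phit N1 N2 lam (α*lam) r.val) - 1))
          linarith only [hae]
    _ = Real.exp (∑ r : Fin t, pval L r.val * (Real.exp (phit N1 N2 lam (α*lam) r.val) - 1)) := by
        rw [Real.exp_sum]
    _ ≤ 2 / c^2 * (n:ℝ) ^ (-(8 * Real.log (4/α))) := by
        have hsum : ∑ r : Fin t, pval L r.val * (Real.exp (phit N1 N2 lam (α*lam) r.val) - 1)
            = A * (Real.exp lam - 1) + Bl * (Real.exp (-(α*lam)) - 1) := by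
          rw [Fin.sum_univ_eq_sum_range
            (fun j => pval L j * (Real.exp (phit N1 N2 lam (α*lam) j) - 1)) t]
          exact sumsplit L N1 N2 t hN12 ht lam (α*lam)
        rw [hsum]
        calc Real.exp (A * (Real.exp lam - 1) + Bl * (Real.exp (-(α*lam)) - 1))
            ≤ Real.exp (-B/6) := Real.exp_le_exp.2 hE
          _ ≤ 2 / c^2 * (n:ℝ) ^ (-(8 * Real.log (4/α))) := hRHS
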